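/- Suppose x, y, z ∈ S_d are permutations with cycle types [d] (a single d-cycle), [r, 1^{d-r}] (one r-cycle and d−r fixed points), and [s^q, t] (q cycles of length s and one t-cycle), respectively, where q, s, t, r are positive integers with r > 1, t > 1, q = (d−t)/s, gcd(s,t) = 1, and r + t + q(s−1) = d + 1. Then the subgroup ⟨x, y, z⟩ of S_d is primitive. -/

import Mathlib

open Equiv Function

set_option linter.unusedSectionVars false

namespace Stmt7

variable {α : Type*} [Fintype α] [DecidableEq α]

lemma perm_periodic (g : Equiv.Perm α) (a : α) : a ∈ Function.periodicPts ⇑g :=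
  ⟨orderOf g, orderOf_pos g, by
    show (⇑g)^[orderOf g] a = a
    rw [Equiv.Perm.iterate_eq_pow, pow_orderOf_eq_one]; rfl⟩

lemma mp_pos (g : Equiv.Perm α) (a : α) : 0 < Function.minimalPeriod ⇑g a :=
  Function.minimalPeriod_pos_of_mem_periodicPts (perm_periodic g a)

lemma pow_apply_eq_iff_dvd (g : Equiv.Perm α) (a : α) (n : ℕ) :
    (g ^ n) a = a ↔ Function.minimalPeriod ⇑g a ∣ n := by
  rw [← Function.isPeriodicPt_iff_minimalPeriod_dvd]
  unfold Function.IsPeriodicPt Function.IsFixedPt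
  rw [Equiv.Perm.iterate_eq_pow]

lemma pow_apply_mp (g : Equiv.Perm α) (a : α) : (g ^ Function.minimalPeriod ⇑g a) a = a := by
  rw [pow_apply_eq_iff_dvd]

/-- the orbit of `a` under `g` as a `Finset`. -/
noncomputable def orb (g : Equiv.Perm α) (a : α) : Finset α :=
  (Finset.range (Function.minimalPeriod ⇑g a)).image (fun i => (g ^ i) a)

lemma pow_mem_orb (g : Equiv.Perm α) (a : α) (n : ℕ) : (g ^ n) a ∈ orb g a := by
  have h := Function.iterate_mod_minimalPeriod_eq (f := ⇑g) (x := a) (n := n)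
  rw [Equiv.Perm.iterate_eq_pow, Equiv.Perm.iterate_eq_pow] at h
  exact Finset.mem_image.2 ⟨n % Function.minimalPeriod ⇑g a,
    Finset.mem_range.2 (Nat.mod_lt _ (mp_pos g a)), h⟩

lemma mem_orb_iff {g : Equiv.Perm α} {a v : α} : v ∈ orb g a ↔ ∃ n : ℕ, (g ^ n) a = v := by
  constructor
  · rintro h
    obtain ⟨i, -, rfl⟩ := Finset.mem_image.1 h
    exact ⟨i, rfl⟩
  · rintro ⟨n, rfl⟩; exact pow_mem_orb g a n

lemma card_orb (g : Equiv.Perm α) (a : α) : (orb g a).card = Function.minimalPeriod ⇑g a := by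
  rw [orb, Finset.card_image_of_injOn, Finset.card_range]
  intro i hi j hj hij
  simp only [Finset.coe_range, Set.mem_Iio] at hi hj
  have := Function.iterate_injOn_Iio_minimalPeriod (f := ⇑g) (x := a) (Set.mem_Iio.2 hi)
    (Set.mem_Iio.2 hj)
  simp only [Equiv.Perm.iterate_eq_pow] at this
  exact this hij

lemma IsCycle.mp_eq_card {σ : Equiv.Perm α} (hσ : σ.IsCycle) {a : α} (ha : σ a ≠ a) :
    Function.minimalPeriod ⇑σ a = σ.support.card := by
  apply Nat.dvd_antisymm
  · rw [← hσ.orderOf]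
    rw [← pow_apply_eq_iff_dvd]
    rw [pow_orderOf_eq_one]; rfl
  · rw [← hσ.orderOf]
    exact orderOf_dvd_of_pow_eq_one ((hσ.pow_eq_one_iff' ha).2 (pow_apply_mp σ a))

lemma mp_eq_card_support_cycleOf (g : Equiv.Perm α) (a : α) (ha : g a ≠ a) :
    Function.minimalPeriod ⇑g a = (g.cycleOf a).support.card := by
  have key : ∀ n : ℕ, ((g.cycleOf a) ^ n) a = a ↔ (g ^ n) a = a := by
    intro n; rw [g.cycleOf_pow_apply_self a n]
  have h1 : Function.minimalPeriod ⇑g a = Function.minimalPeriod ⇑(g.cycleOf a) a := by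
    apply Nat.dvd_antisymm
    · rw [← pow_apply_eq_iff_dvd, ← key, pow_apply_mp]
    · rw [← pow_apply_eq_iff_dvd, key, pow_apply_mp]
  rw [h1, Stmt7.IsCycle.mp_eq_card (g.isCycle_cycleOf ha)]
  rw [g.cycleOf_apply_self]; exact ha

lemma pow_mem_of_inv {g : Equiv.Perm α} {S : Finset α} (hinv : ∀ u ∈ S, g u ∈ S)
    {u : α} (hu : u ∈ S) (n : ℕ) : (g ^ n) u ∈ S := by
  induction n with
  | zero => simpa using hu
  | succ n ih => rw [pow_succ', Equiv.Perm.mul_apply]; exact hinv _ ih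

lemma dvd_card_of_invariant (g : Equiv.Perm α) (s : ℕ) (hs : 0 < s) :
    ∀ n (S : Finset α), S.card = n → (∀ u ∈ S, g u ∈ S) →
      (∀ u ∈ S, (g.cycleOf u).support.card = s) → s ∣ S.card := by
  intro n
  induction n using Nat.strong_induction_on with
  | _ n ih =>
    rintro S rfl hinv hcard
    rcases S.eq_empty_or_nonempty with rfl | ⟨u, hu⟩
    · simp
    have hus : g u ≠ u := by
      intro h
      have h0 : g.cycleOf u = 1 := (Equiv.Perm.cycleOf_eq_one_iff g).2 h
      have := hcard u hu
      rw [h0] at this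
      simp at this; omega
    set O := (g.cycleOf u).support with hO
    have hOmem : ∀ v, v ∈ O ↔ g.SameCycle u v := by
      intro v
      rw [hO, Equiv.Perm.mem_support_cycleOf_iff]
      simp [Equiv.Perm.mem_support, hus]
    have hOS : O ⊆ S := by
      intro v hv
      rw [hOmem] at hv
      obtain ⟨i, -, -, hi⟩ := hv.exists_pow_eq g
      exact hi ▸ pow_mem_of_inv hinv hu i
    have hOcard : O.card = s := hcard u hu
    have hune : u ∈ O := (hOmem u).2 (Equiv.Perm.SameCycle.refl g u)
    have hlt : (S \ O).card < S.card := by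
      have h1 : O.card ≤ S.card := Finset.card_le_card hOS
      rw [Finset.card_sdiff_of_subset hOS]
      omega
    have hinv' : ∀ v ∈ S \ O, g v ∈ S \ O := by
      intro v hv
      rw [Finset.mem_sdiff] at hv ⊢
      refine ⟨hinv v hv.1, fun hgv => hv.2 ?_⟩
      rw [hOmem] at hgv ⊢
      exact hgv.trans (Equiv.Perm.SameCycle.symm ⟨1, by simp⟩)
    have hdvd : s ∣ (S \ O).card :=
      ih _ hlt _ rfl hinv' (fun v hv => hcard v (Finset.mem_sdiff.1 hv).1)
    have hsum : S.card = (S \ O).card + s := by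
      rw [Finset.card_sdiff_of_subset hOS, hOcard]
      have h1 : O.card ≤ S.card := Finset.card_le_card hOS
      omega
    rw [hsum]
    exact dvd_add hdvd dvd_rfl

end Stmt7


/-- permutations `x, y, z ∈ S_d` of cycle types `[d]`, `[r, 1^{d-r}]`, `[s^q, t]`
with `r, t > 1`, `q·s + t = d`, `gcd(s,t) = 1` and the Riemann–Hurwitz relation
`r + t + q(s−1) = d + 1` generate a primitive subgroup of `S_d`. -/
theorem stmt7 (d q s t r : ℕ) (hr : 1 < r) (ht : 1 < t) (hq : 0 < q) (hs : 0 < s)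
    (hrd : r ≤ d)
    (hqs : q * s + t = d) (hcop : Nat.gcd s t = 1) (hRH : r + t + q * (s - 1) = d + 1)
    (x y z : Equiv.Perm (Fin d))
    (hx : x.cycleType = {d})
    (hy : y.cycleType = {r})
    (hz : z.cycleType = if s = 1 then {t} else Multiset.replicate q s + {t}) :
    (∀ a b : Fin d, ∃ g ∈ Subgroup.closure {x, y, z}, g a = b) ∧
    ∀ B : Set (Fin d),
      (∀ g ∈ Subgroup.closure {x, y, z}, ⇑g '' B = B ∨ Disjoint (⇑g '' B) B) →
      B.Subsingleton ∨ B = Set.univ := by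
  classical
  have hqs1 : 0 < q * s := Nat.mul_pos hq hs
  have hd3 : 3 ≤ d := by omega
  haveI : NeZero d := ⟨by omega⟩
  set G := Subgroup.closure {x, y, z} with hG
  have hxG : x ∈ G := Subgroup.subset_closure (by simp)
  have hyG : y ∈ G := Subgroup.subset_closure (by simp)
  have hzG : z ∈ G := Subgroup.subset_closure (by simp)
  have hrq : r = q + 1 := by
    have h1 : q * (s - 1) = q * s - q := by
      rw [Nat.mul_sub]; simp
    have h2 : q ≤ q * s := Nat.le_mul_of_pos_right q hs
    omega
  -- facts about x
  have hxc : x.IsCycle := by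
    rw [← Equiv.Perm.card_cycleType_eq_one, hx]; rfl
  have hxsupp : x.support = Finset.univ := by
    apply Finset.eq_univ_of_card
    have h := x.sum_cycleType
    rw [hx] at h
    simp only [Multiset.sum_singleton] at h
    rw [← h]; simp
  have hxmem : ∀ a : Fin d, x a ≠ a := fun a =>
    Equiv.Perm.mem_support.1 (hxsupp ▸ Finset.mem_univ a)
  have hxord : orderOf x = d := by
    have h := x.lcm_cycleType
    rw [hx] at h
    simpa using h.symm
  have hxd : x ^ d = 1 := by
    have h := pow_orderOf_eq_one x
    rwa [hxord] at h
  have hpowmod : ∀ n : ℕ, x ^ (n % d) = x ^ n := by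
    intro n
    conv_rhs => rw [← Nat.div_add_mod n d]
    rw [pow_add, pow_mul, hxd, one_pow, one_mul]
  constructor
  · intro a b
    obtain ⟨i, hi⟩ := hxc.exists_pow_eq (hxmem a) (hxmem b)
    exact ⟨x ^ i, pow_mem hxG i, hi⟩
  intro B hB
  by_cases hsub : B.Subsingleton
  · exact Or.inl hsub
  right
  by_contra hBuniv
  rw [Set.not_subsingleton_iff] at hsub
  obtain ⟨a₀, ha₀, a₁, ha₁, hne⟩ := hsub
  -- the equivalence f : ZMod d ≃ Fin d, sending j to x^j a₀
  have hmpx : ∀ a : Fin d, Function.minimalPeriod ⇑x a = d := by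
    intro a
    rw [Stmt7.IsCycle.mp_eq_card hxc (hxmem a), hxsupp]
    simp
  have hf0inj : Function.Injective (fun j : ZMod d => (x ^ j.val) a₀) := by
    intro i j hij
    simp only at hij
    apply ZMod.val_injective
    have hiv : i.val < d := i.val_lt
    have hjv : j.val < d := j.val_lt
    by_contra hnev
    have key : (x ^ (i.val + (d - j.val))) a₀ = a₀ := by
      calc (x ^ (i.val + (d - j.val))) a₀
          = (x ^ (d - j.val)) ((x ^ i.val) a₀) := by
            rw [add_comm, pow_add, Equiv.Perm.mul_apply]
        _ = (x ^ (d - j.val)) ((x ^ j.val) a₀) := by rw [hij]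
        _ = (x ^ (d - j.val + j.val)) a₀ := by rw [pow_add, Equiv.Perm.mul_apply]
        _ = a₀ := by rw [Nat.sub_add_cancel (le_of_lt hjv), hxd]; rfl
    rw [Stmt7.pow_apply_eq_iff_dvd, hmpx] at key
    have hsum : i.val + (d - j.val) = d :=
      Nat.eq_of_dvd_of_lt_two_mul (by omega) key (by omega)
    omega
  have hbijf : Function.Bijective (fun j : ZMod d => (x ^ j.val) a₀) :=
    (Fintype.bijective_iff_injective_and_card _).2 ⟨hf0inj, by simp⟩
  set f : ZMod d ≃ Fin d := Equiv.ofBijective _ hbijf with hfdef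
  have hf : ∀ j : ZMod d, f j = (x ^ j.val) a₀ := fun j => rfl
  have hf0 : f 0 = a₀ := by rw [hf]; simp
  have hfkey : ∀ (j c : ZMod d), f (j + c) = (x ^ c.val) (f j) := by
    intro j c
    rw [hf, hf, ← Equiv.Perm.mul_apply, ← pow_add]
    have h1 : (j + c).val = (j.val + c.val) % d := ZMod.val_add j c
    rw [h1, hpowmod, Nat.add_comm]
  -- B = f '' S for a subgroup S
  have hdich : ∀ g ∈ G, (∃ w ∈ B, g w ∈ B) → ⇑g '' B = B := by
    rintro g hg ⟨w, hw, hw'⟩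
    exact (hB g hg).resolve_right fun h => Set.disjoint_left.1 h ⟨w, hw, rfl⟩ hw'
  have hSmem : ∀ c : ZMod d, f c ∈ B ↔ c ∈ (f ⁻¹' B) := fun c => Iff.rfl
  have hS0 : (0 : ZMod d) ∈ f ⁻¹' B := by
    simp only [Set.mem_preimage, hf0]; exact ha₀
  set H : AddSubgroup (ZMod d) :=
    { carrier := f ⁻¹' B
      zero_mem' := hS0
      add_mem' := by
        intro a c ha hc
        have h1 : ⇑(x ^ a.val) '' B = B := by
          apply hdich _ (pow_mem hxG _)
          refine ⟨a₀, ha₀, ?_⟩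
          have : (x ^ a.val) a₀ = f a := by rw [← hf0, ← hfkey, zero_add]
          rw [this]; exact ha
        have h2 : f (a + c) = (x ^ a.val) (f c) := by rw [add_comm, hfkey]
        show f (a + c) ∈ B
        rw [h2, ← h1]
        exact ⟨f c, hc, rfl⟩
      neg_mem' := by
        intro a ha
        have h1 : ⇑(x ^ (-a).val) '' B = B := by
          apply hdich _ (pow_mem hxG _)
          refine ⟨f a, ha, ?_⟩
          have : (x ^ (-a).val) (f a) = a₀ := by rw [← hfkey, add_neg_cancel, hf0]
          rw [this]; exact ha₀
        show f (-a) ∈ B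
        have : f (-a) = (x ^ (-a).val) a₀ := by rw [← hf0, ← hfkey, zero_add]
        rw [this, ← h1]
        exact ⟨a₀, ha₀, rfl⟩ } with hHdef
  have hHmem : ∀ c : ZMod d, c ∈ H ↔ f c ∈ B := fun c => Iff.rfl
  have hBmem : ∀ a : Fin d, a ∈ B ↔ f.symm a ∈ H := by
    intro a
    rw [hHmem, Equiv.apply_symm_apply]
  -- cardinalities
  set b := Nat.card H with hbdef
  have hcardQH : d = Nat.card (ZMod d ⧸ H) * b := by
    have h := AddSubgroup.card_eq_card_quotient_mul_card_addSubgroup H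
    rwa [Nat.card_zmod] at h
  have hbdvd : b ∣ d := Dvd.intro_left _ hcardQH.symm
  have hb2 : 2 ≤ b := by
    have h0 : (0 : ZMod d) ∈ H := H.zero_mem
    have hc1 : f.symm a₁ ∈ H := (hBmem a₁).1 ha₁
    have hne1 : f.symm a₁ ≠ 0 := by
      intro h
      apply hne
      have : f (f.symm a₁) = f 0 := by rw [h]
      rw [Equiv.apply_symm_apply, hf0] at this
      exact this.symm
    rw [hbdef, Nat.card_eq_fintype_card]
    have h2 : (⟨f.symm a₁, hc1⟩ : H) ≠ (⟨0, h0⟩ : H) := by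
      intro h; exact hne1 (congrArg Subtype.val h)
    exact Fintype.one_lt_card_iff.2 ⟨_, _, h2⟩
  have hHne : H ≠ ⊤ := by
    intro htop
    apply hBuniv
    ext a
    simp only [Set.mem_univ, iff_true]
    rw [hBmem, htop]
    exact AddSubgroup.mem_top _
  have hbltd : b < d := by
    rcases lt_or_eq_of_le (Nat.le_of_dvd (by omega) hbdvd) with h | h
    · exact h
    · exact absurd (AddSubgroup.eq_top_of_card_eq _
        (by rw [← hbdef, h, Nat.card_zmod])) hHne
  set k := Nat.card (ZMod d ⧸ H) with hkdef
  have hkb : k * b = d := hcardQH.symm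
  have hk2 : 2 ≤ k := by
    by_contra hklt
    push_neg at hklt
    interval_cases k
    · simp at hkb; omega
    · simp at hkb; omega
  -- the block map
  set β : Fin d → ZMod d ⧸ H := fun a => QuotientAddGroup.mk (f.symm a) with hβdef
  have hβf : ∀ j : ZMod d, β (f j) = QuotientAddGroup.mk j := by
    intro j; rw [hβdef]; simp
  -- fibers of β
  set fib : (ZMod d ⧸ H) → Finset (Fin d) :=
    fun u => Finset.univ.filter (fun a => β a = u) with hfibdef
  have hfibmem : ∀ u a, a ∈ fib u ↔ β a = u := by
    intro u a; simp [hfibdef]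
  have hfibcard : ∀ u, (fib u).card = b := by
    intro u
    have himg : fib u =
        (Finset.univ.filter (fun c : ZMod d => c ∈ H)).image (fun c => f (u.out + c)) := by
      ext a
      rw [hfibmem]
      simp only [Finset.mem_image, Finset.mem_filter, Finset.mem_univ, true_and]
      constructor
      · intro ha
        refine ⟨f.symm a - u.out, ?_, ?_⟩
        · have h1 : (QuotientAddGroup.mk (f.symm a) : ZMod d ⧸ H) =
              QuotientAddGroup.mk u.out := by
            rw [← hβf, Equiv.apply_symm_apply, ha, QuotientAddGroup.out_eq']
          rw [QuotientAddGroup.eq] at h1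
          have h2 := H.neg_mem h1
          have h3 : -(-f.symm a + u.out) = f.symm a - u.out := by ring
          rwa [h3] at h2
        · have h4 : u.out + (f.symm a - u.out) = f.symm a := by ring
          rw [h4, Equiv.apply_symm_apply]
      · rintro ⟨c, hc, rfl⟩
        rw [hβf]
        have h1 : (QuotientAddGroup.mk (u.out + c) : ZMod d ⧸ H) =
            QuotientAddGroup.mk u.out := by
          rw [QuotientAddGroup.eq]
          have h3 : -(u.out + c) + u.out = -c := by ring
          rw [h3]
          exact H.neg_mem hc
        rw [h1, QuotientAddGroup.out_eq']
    rw [himg]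
    rw [Finset.card_image_of_injective _ (fun c1 c2 h => by
      have := f.injective h
      exact add_left_cancel this)]
    rw [hbdef, Nat.card_eq_fintype_card]
    rw [Fintype.card_subtype]
  -- every element of G maps fibers to fibers
  have hwd : ∀ g ∈ G, ∀ a a' : Fin d, β a = β a' → β (g a) = β (g a') := by
    intro g hg a a' hβeq
    set i' : ZMod d := f.symm a' with hi'
    have hc : f.symm a - i' ∈ H := by
      have h1 : (QuotientAddGroup.mk (f.symm a) : ZMod d ⧸ H) =
          QuotientAddGroup.mk i' := hβeq
      rw [QuotientAddGroup.eq] at h1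
      have h2 := H.neg_mem h1
      have h3 : -(-f.symm a + i') = f.symm a - i' := by ring
      rwa [h3] at h2
    set c : ZMod d := f.symm a - i' with hcdef
    have ha_eq : a = (x ^ c.val) (f i') := by
      rw [← hfkey]
      have : i' + c = f.symm a := by rw [hcdef]; ring
      rw [this, Equiv.apply_symm_apply]
    set j' : ZMod d := f.symm (g a') with hj'
    set w : Equiv.Perm (Fin d) := (x ^ j'.val)⁻¹ * g * x ^ i'.val with hw
    have hwG : w ∈ G := mul_mem (mul_mem (inv_mem (pow_mem hxG _)) hg) (pow_mem hxG _)
    have hwa₀ : w a₀ = a₀ := by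
      rw [hw]
      simp only [Equiv.Perm.mul_apply]
      have h1 : (x ^ i'.val) a₀ = a' := by
        rw [← hf0, ← hfkey, zero_add, hi', Equiv.apply_symm_apply]
      rw [h1]
      have h2 : g a' = (x ^ j'.val) a₀ := by
        rw [← hf0, ← hfkey, zero_add, hj', Equiv.apply_symm_apply]
      rw [h2]
      simp
    have hwB : ⇑w '' B = B := hdich w hwG ⟨a₀, ha₀, by rw [hwa₀]; exact ha₀⟩
    have hfc : f c ∈ B := (hHmem c).1 hc
    have hwfc : w (f c) ∈ B := by
      rw [← hwB]; exact ⟨f c, hfc, rfl⟩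
    have hwfc' : w (f c) = (x ^ j'.val)⁻¹ (g a) := by
      rw [hw]
      simp only [Equiv.Perm.mul_apply]
      have h1 : (x ^ i'.val) (f c) = a := by
        rw [← hfkey]
        have h2 : c + i' = f.symm a := by rw [hcdef]; ring
        rw [h2, Equiv.apply_symm_apply]
      rw [h1]
    rw [hwfc'] at hwfc
    set v : ZMod d := f.symm ((x ^ j'.val)⁻¹ (g a)) with hvdef
    have hv : v ∈ H := (hBmem _).1 hwfc
    have hga : g a = f (v + j') := by
      rw [hfkey, hvdef, Equiv.apply_symm_apply]
      simp
    show QuotientAddGroup.mk (f.symm (g a)) = QuotientAddGroup.mk (f.symm (g a'))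
    rw [hga, Equiv.symm_apply_apply, ← hj']
    rw [QuotientAddGroup.eq]
    have h3 : -(v + j') + j' = -v := by ring
    rw [h3]
    exact H.neg_mem hv
  -- induced maps on the quotient
  have hbar : ∀ g, g ∈ G → ∃ gb : (ZMod d ⧸ H) → (ZMod d ⧸ H),
      ∀ a, gb (β a) = β (g a) := by
    intro g hg
    refine ⟨fun u => β (g (f u.out)), fun a => ?_⟩
    apply hwd g hg
    rw [hβf, QuotientAddGroup.out_eq']
  have hiter : ∀ (g : Equiv.Perm (Fin d)) (gb : (ZMod d ⧸ H) → (ZMod d ⧸ H)),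
      (∀ a, gb (β a) = β (g a)) → ∀ (n : ℕ) (a : Fin d), gb^[n] (β a) = β ((g ^ n) a) := by
    intro g gb hgb n
    induction n with
    | zero => intro a; simp
    | succ n ih =>
      intro a
      rw [Function.iterate_succ_apply, hgb, ih, pow_succ, Equiv.Perm.mul_apply]
  -- facts about y, and the dichotomy r ≤ b or b ∣ r
  have hyc : y.IsCycle := by
    rw [← Equiv.Perm.card_cycleType_eq_one, hy]; rfl
  have hysupp : y.support.card = r := by
    have h := y.sum_cycleType
    rw [hy] at h
    simpa using h.symm
  obtain ⟨a₂, ha₂⟩ : ∃ a, a ∈ y.support := by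
    have h : 0 < y.support.card := by omega
    obtain ⟨a, ha⟩ := Finset.card_pos.1 h
    exact ⟨a, ha⟩
  have hya₂ : y a₂ ≠ a₂ := Equiv.Perm.mem_support.1 ha₂
  have hmpy : Function.minimalPeriod ⇑y a₂ = r := by
    rw [Stmt7.IsCycle.mp_eq_card hyc hya₂, hysupp]
  obtain ⟨yb, hyb⟩ := hbar y hyG
  have hybit := hiter y yb hyb
  have hyper : Function.IsPeriodicPt yb r (β a₂) := by
    show yb^[r] (β a₂) = β a₂
    rw [hybit]
    congr 1
    rw [Stmt7.pow_apply_eq_iff_dvd, hmpy]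
  set p_y := Function.minimalPeriod yb (β a₂) with hpydef
  have hpydvd : p_y ∣ r := Function.isPeriodicPt_iff_minimalPeriod_dvd.1 hyper
  have hpypos : 0 < p_y :=
    Function.minimalPeriod_pos_of_mem_periodicPts ⟨r, by omega, hyper⟩
  have hydich : r ≤ b ∨ b ∣ r := by
    by_cases hpy1 : p_y = 1
    · left
      have hfix : yb (β a₂) = β a₂ := by
        have h := Function.iterate_minimalPeriod (f := yb) (x := β a₂)
        rwa [← hpydef, hpy1, Function.iterate_one] at h
      have horb : Stmt7.orb y a₂ ⊆ fib (β a₂) := by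
        intro v hv
        obtain ⟨n, rfl⟩ := Stmt7.mem_orb_iff.1 hv
        rw [hfibmem, ← hybit n a₂]
        exact Function.iterate_fixed hfix n
      calc r = (Stmt7.orb y a₂).card := by rw [Stmt7.card_orb, hmpy]
        _ ≤ (fib (β a₂)).card := Finset.card_le_card horb
        _ = b := hfibcard _
    · right
      have hp2 : 2 ≤ p_y := by omega
      have hkey : fib (β a₂) = Stmt7.orb (y ^ p_y) a₂ := by
        ext v
        rw [hfibmem, Stmt7.mem_orb_iff]
        constructor
        · intro hv
          have hvy : y v ≠ v := by
            intro hfixv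
            have h1 : yb (β v) = β v := by rw [hyb, hfixv]
            rw [hv] at h1
            have h2 : p_y ∣ 1 := Function.isPeriodicPt_iff_minimalPeriod_dvd.1
              (show Function.IsPeriodicPt yb 1 (β a₂) by simpa [Function.IsPeriodicPt, Function.IsFixedPt] using h1)
            have := Nat.le_of_dvd one_pos h2
            omega
          obtain ⟨n, -, -, hn⟩ := (hyc.sameCycle hya₂ hvy).exists_pow_eq y
          have hdvd : p_y ∣ n := by
            apply Function.isPeriodicPt_iff_minimalPeriod_dvd.1
            show yb^[n] (β a₂) = β a₂
            rw [hybit, hn, hv]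
          obtain ⟨j, rfl⟩ := hdvd
          exact ⟨j, by rw [← pow_mul]; exact hn⟩
        · rintro ⟨n, rfl⟩
          rw [← pow_mul, ← hybit, Function.iterate_mul]
          apply Function.iterate_fixed
          have h := Function.iterate_minimalPeriod (f := yb) (x := β a₂)
          rwa [← hpydef] at h
      have hcard : b = Function.minimalPeriod ⇑(y ^ p_y) a₂ := by
        rw [← Stmt7.card_orb, ← hkey, hfibcard]
      have hiterpow : Function.minimalPeriod ⇑(y ^ p_y) a₂ = r / p_y := by
        have h1 : ⇑(y ^ p_y) = (⇑y)^[p_y] := by rw [Equiv.Perm.iterate_eq_pow]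
        rw [h1, Function.minimalPeriod_iterate_eq_div_gcd (by omega), hmpy,
          Nat.gcd_eq_right hpydvd]
      have hbr : b = r / p_y := hcard.trans hiterpow
      rw [hbr]
      exact Nat.div_dvd_of_dvd hpydvd
  -- facts about z
  have hst : s ≠ t := by
    intro h
    rw [h, Nat.gcd_self] at hcop
    omega
  have htmem : t ∈ z.cycleType := by
    rw [hz]
    split_ifs
    · exact Multiset.mem_singleton_self t
    · exact Multiset.mem_add.2 (Or.inr (Multiset.mem_singleton_self t))
  have hcount : Multiset.count t z.cycleType = 1 := by
    rw [hz]
    split_ifs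
    · simp
    · rw [Multiset.count_add, Multiset.count_replicate, Multiset.count_singleton]
      simp [hst]
  obtain ⟨ζ, hζfac, hζcard⟩ : ∃ c ∈ z.cycleFactorsFinset, c.support.card = t := by
    rw [Equiv.Perm.cycleType_def] at htmem
    obtain ⟨c, hc, hcc⟩ := Multiset.mem_map.1 htmem
    exact ⟨c, hc, hcc⟩
  set T : Finset (Fin d) := ζ.support with hTdef
  have hTcard : T.card = t := hζcard
  obtain ⟨a₃, ha₃⟩ : ∃ a, a ∈ T := by
    have h : 0 < T.card := by omega
    obtain ⟨a, ha⟩ := Finset.card_pos.1 h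
    exact ⟨a, ha⟩
  have hζa₃ : ζ = z.cycleOf a₃ := Equiv.Perm.cycle_is_cycleOf ha₃ hζfac
  have hza₃ : z a₃ ≠ a₃ := by
    have h := ha₃
    rw [hTdef, hζa₃, Equiv.Perm.mem_support_cycleOf_iff] at h
    exact Equiv.Perm.mem_support.1 h.2
  have hmpz₃ : Function.minimalPeriod ⇑z a₃ = t := by
    rw [Stmt7.mp_eq_card_support_cycleOf z a₃ hza₃, ← hζa₃]
    exact hTcard
  have hTmem : ∀ v, v ∈ T ↔ z.SameCycle a₃ v := by
    intro v
    rw [hTdef, hζa₃, Equiv.Perm.mem_support_cycleOf_iff]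
    simp [Equiv.Perm.mem_support, hza₃]
  have hoffT : ∀ u, u ∉ T → z u ≠ u → Function.minimalPeriod ⇑z u = s := by
    intro u hu hzu
    have hcfac : z.cycleOf u ∈ z.cycleFactorsFinset :=
      Equiv.Perm.cycleOf_mem_cycleFactorsFinset_iff.2 (Equiv.Perm.mem_support.2 hzu)
    have huu : u ∈ (z.cycleOf u).support :=
      Equiv.Perm.mem_support_cycleOf_iff.2
        ⟨Equiv.Perm.SameCycle.refl z u, Equiv.Perm.mem_support.2 hzu⟩
    have hnez : z.cycleOf u ≠ ζ := by
      intro h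
      apply hu
      rw [hTdef, ← h]
      exact huu
    have hmem : (z.cycleOf u).support.card ∈ z.cycleType := by
      rw [Equiv.Perm.cycleType_def]
      exact Multiset.mem_map.2 ⟨_, hcfac, rfl⟩
    have hst' : (z.cycleOf u).support.card = s ∨ (z.cycleOf u).support.card = t := by
      rw [hz] at hmem
      split_ifs at hmem with h1
      · right; exact Multiset.mem_singleton.1 hmem
      · rcases Multiset.mem_add.1 hmem with h | h
        · left; exact Multiset.eq_of_mem_replicate h
        · right; exact Multiset.mem_singleton.1 h
    rcases hst' with h | h
    · rw [Stmt7.mp_eq_card_support_cycleOf z u hzu, h]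
    · exfalso
      have h2 : 2 ≤ Multiset.count t z.cycleType := by
        rw [Equiv.Perm.cycleType_def, Multiset.count_map]
        have hc1 : z.cycleOf u ∈ Multiset.filter
            (fun c => t = (Finset.card ∘ Equiv.Perm.support) c) z.cycleFactorsFinset.val :=
          Multiset.mem_filter.2 ⟨hcfac, h.symm⟩
        obtain ⟨rest, hrest⟩ := Multiset.exists_cons_of_mem hc1
        have hc2 : ζ ∈ Multiset.filter
            (fun c => t = (Finset.card ∘ Equiv.Perm.support) c) z.cycleFactorsFinset.val :=
          Multiset.mem_filter.2 ⟨hζfac, hζcard.symm⟩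
        rw [hrest] at hc2
        rcases Multiset.mem_cons.1 hc2 with h3 | h3
        · exact absurd h3.symm hnez
        · rw [hrest, Multiset.card_cons]
          have := Multiset.card_pos_iff_exists_mem.2 ⟨ζ, h3⟩
          omega
      omega
  -- the induced map of z on the quotient
  obtain ⟨zb, hzb⟩ := hbar z hzG
  have hzbit := hiter z zb hzb
  have hzper : Function.IsPeriodicPt zb t (β a₃) := by
    show zb^[t] (β a₃) = β a₃
    rw [hzbit]
    congr 1
    rw [Stmt7.pow_apply_eq_iff_dvd, hmpz₃]
  set p := Function.minimalPeriod zb (β a₃) with hpdef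
  have hpdvd : p ∣ t := Function.isPeriodicPt_iff_minimalPeriod_dvd.1 hzper
  have hppos : 0 < p :=
    Function.minimalPeriod_pos_of_mem_periodicPts ⟨t, by omega, hzper⟩
  have hperiodic : β a₃ ∈ Function.periodicPts zb := ⟨t, by omega, hzper⟩
  by_cases hp1 : p = 1
  · -- CASE B : the t-cycle is contained in a single block
    have hfixq : zb (β a₃) = β a₃ := by
      have h := Function.iterate_minimalPeriod (f := zb) (x := β a₃)
      rwa [← hpdef, hp1, Function.iterate_one] at h
    have hTsub : T ⊆ fib (β a₃) := by
      intro v hv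
      obtain ⟨n, -, -, hn⟩ := ((hTmem v).1 hv).exists_pow_eq z
      rw [hfibmem, ← hn, ← hzbit n a₃]
      exact Function.iterate_fixed hfixq n
    set W := fib (β a₃) \ T with hWdef
    have hWcardeq : W.card + t = b := by
      have h := Finset.card_sdiff_add_card_eq_card hTsub
      rw [hfibcard, ← hWdef] at h
      omega
    have hWinv : ∀ u ∈ W, z u ∈ W := by
      intro u hu
      rw [hWdef, Finset.mem_sdiff] at hu ⊢
      obtain ⟨hufib, huT⟩ := hu
      constructor
      · rw [hfibmem] at hufib ⊢
        have h1 : β (z u) = zb (β u) := (hzb u).symm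
        rw [h1, hufib]
        exact hfixq
      · intro hzuT
        apply huT
        rw [hTmem] at hzuT ⊢
        exact hzuT.trans (Equiv.Perm.SameCycle.symm ⟨1, by simp⟩)
    have hWs : s ∣ W.card := by
      rcases eq_or_lt_of_le (show 1 ≤ s from hs) with h1 | h1
      · rw [← h1]; exact one_dvd _
      · have hzsuppuniv : z.support = Finset.univ := by
          apply Finset.eq_univ_of_card
          have h := z.sum_cycleType
          rw [hz, if_neg (by omega)] at h
          rw [Multiset.sum_add, Multiset.sum_replicate, Multiset.sum_singleton,
            smul_eq_mul] at h
          simp only [Fintype.card_fin]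
          omega
        apply Stmt7.dvd_card_of_invariant z s (by omega) W.card W rfl hWinv
        intro u hu
        have hzu : z u ≠ u := by
          intro hfixu
          have hm : u ∈ z.support := hzsuppuniv ▸ Finset.mem_univ u
          exact (Equiv.Perm.mem_support.1 hm) hfixu
        have huT : u ∉ T := (Finset.mem_sdiff.1 (hWdef ▸ hu)).2
        rw [← Stmt7.mp_eq_card_support_cycleOf z u hzu]
        exact hoffT u huT hzu
    obtain ⟨m, hm⟩ := hWs
    have hmm : m * s = s * m := Nat.mul_comm m s
    have hbm : b = t + m * s := by omega
    have hcopsb : Nat.Coprime s b := by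
      have h1 : Nat.gcd s (t + m * s) = Nat.gcd s t := Nat.gcd_add_mul_right_right s t m
      show Nat.gcd s b = 1
      rw [hbm, h1, hcop]
    have hqm : m < q := by
      by_contra hqm
      push_neg at hqm
      have h1 : q * s ≤ m * s := mul_le_mul_left hqm s
      have h2 : 2 * b ≤ k * b := mul_le_mul_left hk2 b
      omega
    have hsub1 : (q - m) * s = (k - 1) * b := by
      have h1 : (q - m) * s = q * s - m * s := by rw [Nat.sub_mul]
      have h2 : (k - 1) * b = k * b - b := by rw [Nat.sub_mul, one_mul]
      omega
    have hbdvdqm : b ∣ q - m := by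
      have h1 : b ∣ (q - m) * s := by
        rw [hsub1]; exact dvd_mul_left b (k - 1)
      exact (Nat.Coprime.symm hcopsb).dvd_of_dvd_mul_right h1
    have hqmb : b ≤ q - m := Nat.le_of_dvd (by omega) hbdvdqm
    have hms : m ≤ m * s := Nat.le_mul_of_pos_right m hs
    rcases hydich with hcase | hcase
    · omega
    · have hbq1 : b ∣ q + 1 := by rw [← hrq]; exact hcase
      have h1 : b ∣ (q + 1) - (q - m) := Nat.dvd_sub hbq1 hbdvdqm
      have h2 : (q + 1) - (q - m) = m + 1 := by omega
      rw [h2] at h1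
      have h3 := Nat.le_of_dvd (by omega) h1
      omega
  · -- CASE A : the t-cycle covers p ≥ 2 whole blocks, so b ∣ t
    have hp2 : 2 ≤ p := by omega
    set U := (Finset.range p).biUnion (fun i => fib (zb^[i] (β a₃))) with hUdef
    have hUcard : U.card = p * b := by
      rw [hUdef, Finset.card_biUnion]
      · rw [Finset.sum_congr rfl (fun i _ => hfibcard _), Finset.sum_const,
          Finset.card_range, smul_eq_mul]
      · intro i hi j hj hij
        apply Finset.disjoint_left.2
        intro a hai haj
        rw [hfibmem] at hai haj
        apply hij
        have hinj := Function.iterate_injOn_Iio_minimalPeriod (f := zb) (x := β a₃)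
        rw [← hpdef] at hinj
        exact hinj (Set.mem_Iio.2 (Finset.mem_range.1 hi))
          (Set.mem_Iio.2 (Finset.mem_range.1 hj)) (hai.symm.trans haj)
    have hTU : T = U := by
      ext u
      constructor
      · intro hu
        obtain ⟨n, -, -, hn⟩ := ((hTmem u).1 hu).exists_pow_eq z
        rw [hUdef, Finset.mem_biUnion]
        refine ⟨n % p, Finset.mem_range.2 (Nat.mod_lt _ hppos), ?_⟩
        rw [hfibmem, ← hn, ← hzbit n a₃, hpdef]
        exact (Function.iterate_mod_minimalPeriod_eq).symm
      · intro hu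
        rw [hUdef, Finset.mem_biUnion] at hu
        obtain ⟨i, hi, hufib⟩ := hu
        rw [hfibmem] at hufib
        have hmpu : Function.minimalPeriod zb (β u) = p := by
          rw [hufib, Function.minimalPeriod_apply_iterate hperiodic]
        have hzu : z u ≠ u := by
          intro hfixu
          have h1 : zb (β u) = β u := by rw [hzb, hfixu]
          have h2 : p ∣ 1 := by
            rw [← hmpu]
            exact Function.isPeriodicPt_iff_minimalPeriod_dvd.1
              (show Function.IsPeriodicPt zb 1 (β u) by simpa [Function.IsPeriodicPt, Function.IsFixedPt] using h1)
          have := Nat.le_of_dvd one_pos h2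
          omega
        by_contra huT
        have hmps : Function.minimalPeriod ⇑z u = s := hoffT u huT hzu
        have hps : p ∣ s := by
          rw [← hmpu]
          apply Function.isPeriodicPt_iff_minimalPeriod_dvd.1
          show zb^[s] (β u) = β u
          rw [hzbit]
          congr 1
          rw [Stmt7.pow_apply_eq_iff_dvd, hmps]
        have h1 : p ∣ 1 := by rw [← hcop]; exact Nat.dvd_gcd hps hpdvd
        have := Nat.le_of_dvd one_pos h1
        omega
    have hpb : p * b = t := by rw [← hUcard, ← hTU, hTcard]
    have hbt : b ∣ t := Dvd.intro_left _ hpb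
    have hbq : b ∣ q := by
      have h1 : b ∣ q * s := by
        have h2 : q * s = d - t := by omega
        rw [h2]
        exact Nat.dvd_sub hbdvd hbt
      exact (Nat.Coprime.symm (Nat.Coprime.coprime_dvd_right hbt hcop)).dvd_of_dvd_mul_right h1
    rcases hydich with hcase | hcase
    · have := Nat.le_of_dvd hq hbq
      omega
    · have hbq1 : b ∣ q + 1 := by rw [← hrq]; exact hcase
      have h1 : b ∣ (q + 1) - q := Nat.dvd_sub hbq1 hbq
      have h2 : (q + 1) - q = 1 := by omega
      rw [h2] at h1
      have := Nat.le_of_dvd one_pos h1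
      omega
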